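/- In any locally fair fractional orientation of a finite weighted graph G, the maximum out-degree max_v g(v) equals the maximum subgraph density ρ^max(G). -/

import Mathlib

open Finset Real

noncomputable section

variable {V : Type*}

/-- The out-degree of `u` in a fractional orientation `o`. -/
def outdeg [Fintype V] (o : V → V → ℝ) (u : V) : ℝ := ∑ x : V, o u x

/-- `o` is a fractional orientation of the weighted graph `(G, w)`:
nonnegative values on directed edge-halves, supported on edges, summing to the edge weight. -/
def IsOrientation [Fintype V] (G : SimpleGraph V) (w : V → V → ℝ) (o : V → V → ℝ) : Prop :=
  (∀ u v, 0 ≤ o u v) ∧ (∀ u v, ¬ G.Adj u v → o u v = 0) ∧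
    (∀ u v, G.Adj u v → o u v + o v u = w u v)

/-- A fractional orientation is locally fair if positive weight on `u → v`
implies `g(u) ≤ g(v)`. -/
def LocallyFair [Fintype V] (o : V → V → ℝ) : Prop :=
  ∀ u v, 0 < o u v → outdeg o u ≤ outdeg o v

/-- A fractional orientation is `η`-fair if positive weight on `u → v`
implies `g(u) ≤ (1+η)·g(v)`. -/
def EtaFair [Fintype V] (η : ℝ) (o : V → V → ℝ) : Prop :=
  ∀ u v, 0 < o u v → outdeg o u ≤ (1 + η) * outdeg o v

/-- Total weight of edges of `G` inside the vertex set `S`. -/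
def edgeWeight [Fintype V] (G : SimpleGraph V) [DecidableRel G.Adj] (w : V → V → ℝ)
    (S : Finset V) : ℝ :=
  (∑ u ∈ S, ∑ v ∈ S, if G.Adj u v then w u v else 0) / 2

/-- Density of the subgraph induced on `S`. -/
def densityOn [Fintype V] (G : SimpleGraph V) [DecidableRel G.Adj] (w : V → V → ℝ)
    (S : Finset V) : ℝ :=
  edgeWeight G w S / S.card

/-- in any locally fair fractional orientation, the maximum out-degree
equals the maximum subgraph density. -/
theorem locally_fair_max_outdeg_eq_max_density [Fintype V] [Nonempty V]
    (G : SimpleGraph V) [DecidableRel G.Adj] (w : V → V → ℝ)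
    (hwpos : ∀ u v, G.Adj u v → 0 < w u v) (hwsymm : ∀ u v, w u v = w v u)
    (o : V → V → ℝ) (ho : IsOrientation G w o) (hf : LocallyFair o) :
    (⨆ v : V, outdeg o v) =
      sSup {ρ : ℝ | ∃ S : Finset V, S.Nonempty ∧ ρ = densityOn G w S} := by
  classical
  obtain ⟨v₀, hv₀⟩ := Finite.exists_max (outdeg o)
  set M := outdeg o v₀ with hMdef
  -- edgeWeight rewritten in terms of o
  have hEW : ∀ S : Finset V, edgeWeight G w S = ∑ u ∈ S, ∑ v ∈ S, o u v := by
    intro S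
    unfold edgeWeight
    have h1 : ∑ u ∈ S, ∑ v ∈ S, (if G.Adj u v then w u v else 0)
        = ∑ u ∈ S, ∑ v ∈ S, (o u v + o v u) := by
      refine Finset.sum_congr rfl fun u _ => Finset.sum_congr rfl fun v _ => ?_
      split
      · exact (ho.2.2 u v ‹_›).symm
      · rw [ho.2.1 u v ‹_›, ho.2.1 v u (fun h => ‹¬ _› h.symm), add_zero]
    have h2 : ∑ u ∈ S, ∑ v ∈ S, o v u = ∑ u ∈ S, ∑ v ∈ S, o u v :=
      Finset.sum_comm
    rw [h1]
    simp_rw [Finset.sum_add_distrib]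
    rw [h2]; ring
  have hcardpos : ∀ S : Finset V, S.Nonempty → (0:ℝ) < S.card := by
    intro S hS
    exact_mod_cast hS.card_pos
  -- upper bound: every density ≤ M
  have hub : ∀ S : Finset V, S.Nonempty → densityOn G w S ≤ M := by
    intro S hS
    rw [densityOn, hEW, div_le_iff₀ (hcardpos S hS)]
    calc ∑ u ∈ S, ∑ v ∈ S, o u v ≤ ∑ _u ∈ S, M := by
          refine Finset.sum_le_sum fun u _ => ?_
          calc ∑ v ∈ S, o u v ≤ ∑ v : V, o u v :=
                Finset.sum_le_sum_of_subset_of_nonneg (Finset.subset_univ S)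
                  (fun v _ _ => ho.1 u v)
            _ ≤ M := hv₀ u
      _ = S.card * M := by rw [Finset.sum_const, nsmul_eq_mul]
      _ = M * S.card := mul_comm _ _
  -- the set of maximum out-degree vertices
  set S : Finset V := Finset.univ.filter (fun v => M ≤ outdeg o v) with hSdef
  have hv₀S : v₀ ∈ S := by simp [hSdef, hMdef]
  have hSne : S.Nonempty := ⟨v₀, hv₀S⟩
  have hmem : ∀ u ∈ S, outdeg o u = M := fun u hu =>
    le_antisymm (hv₀ u) (Finset.mem_filter.mp hu).2
  have hzero : ∀ u ∈ S, ∀ x, x ∉ S → o u x = 0 := by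
    intro u hu x hx
    by_contra h
    have hpos : 0 < o u x := lt_of_le_of_ne (ho.1 u x) (Ne.symm h)
    have hle := hf u x hpos
    rw [hmem u hu] at hle
    exact hx (Finset.mem_filter.mpr ⟨Finset.mem_univ x, hle⟩)
  have hout : ∀ u ∈ S, ∑ v ∈ S, o u v = M := by
    intro u hu
    rw [← hmem u hu, outdeg]
    exact Finset.sum_subset (Finset.subset_univ S)
      (fun x _ hx => hzero u hu x hx)
  have hdS : densityOn G w S = M := by
    rw [densityOn, hEW, Finset.sum_congr rfl hout, Finset.sum_const, nsmul_eq_mul]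
    field_simp
  -- the set of densities
  have hDne : {ρ : ℝ | ∃ S : Finset V, S.Nonempty ∧ ρ = densityOn G w S}.Nonempty :=
    ⟨densityOn G w S, S, hSne, rfl⟩
  have hDbdd : BddAbove {ρ : ℝ | ∃ S : Finset V, S.Nonempty ∧ ρ = densityOn G w S} := by
    refine ⟨M, fun ρ hρ => ?_⟩
    obtain ⟨T, hT, rfl⟩ := hρ
    exact hub T hT
  have hsup : sSup {ρ : ℝ | ∃ S : Finset V, S.Nonempty ∧ ρ = densityOn G w S} = M := by
    refine le_antisymm (csSup_le hDne ?_) ?_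
    · rintro ρ ⟨T, hT, rfl⟩
      exact hub T hT
    · exact hdS ▸ le_csSup hDbdd ⟨S, hSne, rfl⟩
  have hisup : (⨆ v : V, outdeg o v) = M :=
    le_antisymm (ciSup_le hv₀) (le_ciSup (Set.Finite.bddAbove (Set.finite_range (outdeg o))) v₀)
  rw [hisup, hsup]
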